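/- Let w = w(n) be a function with w(n) → ∞ as n → ∞, and let p = p(n) satisfy (ln n + ln ln n + w(n))/n ≤ p(n) ≤ 10·ln n / n. Then whp the random graph G ~ G(n,p(n)) contains no two cycles, each of length at most ln n / (4·ln(n·p(n))), which share exactly one vertex. -/

import Mathlib

open MeasureTheory Filter Topology SimpleGraph
open scoped ENNReal

/-- The Bernoulli measure on `Bool` with success probability `p`. -/
noncomputable def bernoulliBool (p : ℝ) : Measure Bool :=
  (ENNReal.ofReal p) • Measure.dirac true + (ENNReal.ofReal (1 - p)) • Measure.dirac false

/-- The binomial random graph measure `G(n,p)`: each potential edge (pair of distinct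
vertices of `Fin n`) is present independently with probability `p`. An outcome is an
indicator function on unordered pairs. -/
noncomputable def gnp (n : ℕ) (p : ℝ) : Measure (Sym2 (Fin n) → Bool) :=
  Measure.pi fun _ => bernoulliBool p

/-- The simple graph on `[n]` determined by an outcome `ω` of `G(n,p)`. -/
def graphOf {n : ℕ} (ω : Sym2 (Fin n) → Bool) : SimpleGraph (Fin n) where
  Adj v w := v ≠ w ∧ ω s(v, w) = true
  symm := by
    constructor
    intro v w h
    exact ⟨h.1.symm, by rw [Sym2.eq_swap]; exact h.2⟩
  loopless := by
    constructor
    intro v h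
    exact h.1 rfl

instance graphOfDecidableAdj {n : ℕ} (ω : Sym2 (Fin n) → Bool) :
    DecidableRel (graphOf ω).Adj :=
  fun v w => inferInstanceAs (Decidable (v ≠ w ∧ ω s(v, w) = true))

lemma bern_true (p : ℝ) : bernoulliBool p {true} = ENNReal.ofReal p := by
  simp [bernoulliBool, Measure.dirac_apply' _ (by trivial : MeasurableSet ({true} : Set Bool))]

lemma bern_univ (p : ℝ) (h0 : 0 ≤ p) (h1 : p ≤ 1) : bernoulliBool p Set.univ = 1 := by
  simp [bernoulliBool]
  rw [← ENNReal.ofReal_add h0 (by linarith), add_sub_cancel]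
  simp

instance bern_fin (p : ℝ) : IsFiniteMeasure (bernoulliBool p) := by
  constructor
  simp only [bernoulliBool, Measure.add_apply, Measure.smul_apply, smul_eq_mul]
  refine ENNReal.add_lt_top.2 ⟨?_, ?_⟩ <;>
    exact ENNReal.mul_lt_top ENNReal.ofReal_lt_top (by simp [Measure.dirac_apply])

lemma gnp_all_true (n : ℕ) (p : ℝ) (h0 : 0 ≤ p) (h1 : p ≤ 1) (S : Finset (Sym2 (Fin n))) :
    gnp n p {ω | ∀ e ∈ S, ω e = true} ≤ ENNReal.ofReal p ^ S.card := by
  have hset : {ω : Sym2 (Fin n) → Bool | ∀ e ∈ S, ω e = true}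
      = Set.univ.pi (fun e => if e ∈ S then ({true} : Set Bool) else Set.univ) := by
    ext ω
    simp only [Set.mem_setOf_eq, Set.mem_pi, Set.mem_univ, forall_true_left]
    constructor
    · intro h e
      by_cases he : e ∈ S <;> simp [he]
      exact h e he
    · intro h e he
      have := h e
      simp [he] at this
      exact this
  rw [hset, gnp, Measure.pi_pi]
  have : ∀ e : Sym2 (Fin n), bernoulliBool p (if e ∈ S then ({true} : Set Bool) else Set.univ)
      = if e ∈ S then ENNReal.ofReal p else 1 := by
    intro e; by_cases he : e ∈ S
    · simp [he, bern_true]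
    · simp only [he, if_false]; exact bern_univ p h0 h1
  simp only [this]
  rw [Finset.prod_ite_mem]
  rw [Finset.univ_inter, Finset.prod_const]

lemma perm_toFinset {α} [DecidableEq α] {l l2 : List α} (h : l.Perm l2) :
    l.toFinset = l2.toFinset := by
  ext a; simp [List.mem_toFinset, h.mem_iff]

lemma edges_eq_zipWith {V} {G : SimpleGraph V} {u v : V} (c : G.Walk u v) :
    c.edges = List.zipWith (fun a b => s(a, b)) c.support c.support.tail := by
  induction c with
  | nil => simp
  | cons h q ih =>
    rw [Walk.edges_cons, Walk.support_cons, ih]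
    rw [q.support_eq_cons]
    simp
    have hs := q.support_eq_cons
    generalize q.support = S at hs ⊢
    cases S with
    | nil => simp at hs
    | cons x t =>
      simp only [List.tail_cons, List.cons.injEq, and_true] at hs
      subst hs
      simp

lemma closed_tail_concat {V} {G : SimpleGraph V} {v : V} (c : G.Walk v v) (h : ¬c.Nil) :
    ∃ l, c.support.tail = l ++ [v] := by
  have h1 : c.support = v :: c.support.tail := c.support_eq_cons
  have h2 : c.reverse.support = v :: c.reverse.support.tail := c.reverse.support_eq_cons
  have h3 : c.support = (c.reverse.support.tail).reverse ++ [v] := by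
    rw [← List.reverse_cons, ← h2, c.support_reverse, List.reverse_reverse]
  cases hrt : (c.reverse.support.tail).reverse with
  | nil =>
    rw [hrt] at h3
    simp at h3
    have : c.length + 1 = 1 := by
      have := congrArg List.length h3
      simpa [Walk.length_support] using this
    exact absurd (Walk.nil_iff_length_eq.2 (by omega)) h
  | cons x r =>
    refine ⟨r, ?_⟩
    rw [hrt] at h3
    rw [h1] at h3
    rw [List.cons_append] at h3
    exact (List.cons_eq_cons.1 h3).2

lemma closed_support_toFinset {V} [DecidableEq V] {G : SimpleGraph V} {v : V}
    (c : G.Walk v v) (h : ¬c.Nil) :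
    c.support.toFinset = c.support.tail.toFinset := by
  obtain ⟨l, hl⟩ := closed_tail_concat c h
  rw [c.support_eq_cons, List.toFinset_cons, hl]
  have : v ∈ (l ++ [v]).toFinset := by simp
  rw [Finset.insert_eq_self.2 this, List.tail_cons]

def listsLen (n k : ℕ) : Finset (List (Fin n)) :=
  (Finset.univ : Finset (List.Vector (Fin n) k)).image List.Vector.toList

lemma mem_listsLen {n k : ℕ} {l : List (Fin n)} : l ∈ listsLen n k ↔ l.length = k := by
  constructor
  · intro h
    obtain ⟨v, -, rfl⟩ := Finset.mem_image.1 h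
    exact v.toList_length
  · intro h
    exact Finset.mem_image.2 ⟨⟨l, h⟩, Finset.mem_univ _, rfl⟩

lemma card_listsLen (n k : ℕ) : (listsLen n k).card = n ^ k := by
  rw [listsLen, Finset.card_image_of_injective _ List.Vector.toList_injective,
    Finset.card_univ]
  simp [card_vector]

def allLists (n M : ℕ) : Finset (List (Fin n)) := (Finset.range M).biUnion (listsLen n)

lemma mem_allLists {n M : ℕ} {l : List (Fin n)} : l ∈ allLists n M ↔ l.length < M := by
  simp [allLists, mem_listsLen]

lemma sum_allLists (n M : ℕ) (q : ℝ≥0∞) :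
    ∑ l ∈ allLists n M, q ^ (l.length + 1)
      = ∑ a ∈ Finset.range M, (n : ℝ≥0∞) ^ a * q ^ (a + 1) := by
  rw [allLists, Finset.sum_biUnion]
  · refine Finset.sum_congr rfl fun a _ => ?_
    have : ∀ l ∈ listsLen n a, q ^ (l.length + 1) = q ^ (a + 1) := fun l hl => by
      rw [mem_listsLen.1 hl]
    rw [Finset.sum_congr rfl this, Finset.sum_const, card_listsLen, nsmul_eq_mul,
      Nat.cast_pow]
  · intro a _ b _ hab
    refine Finset.disjoint_left.2 fun l hla hlb => hab ?_
    rw [← mem_listsLen.1 hla, ← mem_listsLen.1 hlb]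

lemma sum_F (n M : ℕ) (q : ℝ≥0∞) :
    ∑ x ∈ ((Finset.univ : Finset (Fin n)) ×ˢ allLists n M ×ˢ allLists n M),
      q ^ (x.2.1.length + 1) * q ^ (x.2.2.length + 1)
      = n * (∑ l ∈ allLists n M, q ^ (l.length + 1)) ^ 2 := by
  rw [Finset.sum_product]
  simp only [Finset.sum_product]
  rw [Finset.sum_const, ← Finset.sum_mul_sum, Finset.card_univ, Fintype.card_fin,
    nsmul_eq_mul, sq]

def cycEdges {n : ℕ} (v : Fin n) (l : List (Fin n)) : Finset (Sym2 (Fin n)) :=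
  (List.zipWith (fun a b => s(a, b)) (v :: (l ++ [v])) (l ++ [v])).toFinset

lemma bad_bound (n : ℕ) (p : ℝ) (h0 : 0 ≤ p) (h1 : p ≤ 1) (M : ℕ)
    (hM : ∀ k : ℕ, (k : ℝ) ≤ Real.log n / (4 * Real.log (n * p)) → k ≤ M) :
    gnp n p {ω | ∃ (a b : Fin n) (c₁ : (graphOf ω).Walk a a) (c₂ : (graphOf ω).Walk b b),
          c₁.IsCycle ∧ c₂.IsCycle ∧
          (c₁.length : ℝ) ≤ Real.log n / (4 * Real.log ((n : ℝ) * p)) ∧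
          (c₂.length : ℝ) ≤ Real.log n / (4 * Real.log ((n : ℝ) * p)) ∧
          (c₁.support.toFinset ∩ c₂.support.toFinset).card = 1}
      ≤ (n : ℝ≥0∞) * (∑ a ∈ Finset.range M, (n : ℝ≥0∞) ^ a * ENNReal.ofReal p ^ (a + 1)) ^ 2 := by
  classical
  set q := ENNReal.ofReal p with hq
  set S : Fin n × List (Fin n) × List (Fin n) → Finset (Sym2 (Fin n)) :=
    fun x => cycEdges x.1 x.2.1 ∪ cycEdges x.1 x.2.2 with hS
  set F : Finset (Fin n × List (Fin n) × List (Fin n)) :=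
    ((Finset.univ : Finset (Fin n)) ×ˢ allLists n M ×ˢ allLists n M) with hF
  set F' : Finset (Fin n × List (Fin n) × List (Fin n)) :=
    F.filter (fun x => (S x).card = x.2.1.length + x.2.2.length + 2) with hF'
  have hsubset : {ω : Sym2 (Fin n) → Bool |
        ∃ (a b : Fin n) (c₁ : (graphOf ω).Walk a a) (c₂ : (graphOf ω).Walk b b),
          c₁.IsCycle ∧ c₂.IsCycle ∧
          (c₁.length : ℝ) ≤ Real.log n / (4 * Real.log ((n : ℝ) * p)) ∧
          (c₂.length : ℝ) ≤ Real.log n / (4 * Real.log ((n : ℝ) * p)) ∧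
          (c₁.support.toFinset ∩ c₂.support.toFinset).card = 1}
      ⊆ ⋃ x ∈ F', {ω : Sym2 (Fin n) → Bool | ∀ e ∈ S x, ω e = true} := by
    rintro ω ⟨a, b, c₁, c₂, hc₁, hc₂, hlen₁, hlen₂, hcard⟩
    obtain ⟨v, hv⟩ := Finset.card_eq_one.1 hcard
    have hv₁ : v ∈ c₁.support := by
      have : v ∈ c₁.support.toFinset ∩ c₂.support.toFinset := by rw [hv]; simp
      exact List.mem_toFinset.1 (Finset.mem_inter.1 this).1
    have hv₂ : v ∈ c₂.support := by
      have : v ∈ c₁.support.toFinset ∩ c₂.support.toFinset := by rw [hv]; simp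
      exact List.mem_toFinset.1 (Finset.mem_inter.1 this).2
    set d₁ := c₁.rotate v hv₁ with hd₁def
    set d₂ := c₂.rotate v hv₂ with hd₂def
    have hd₁ : d₁.IsCycle := hc₁.rotate hv₁
    have hd₂ : d₂.IsCycle := hc₂.rotate hv₂
    have hnil₁ : ¬ d₁.Nil := fun hn => by
      have := hd₁.three_le_length; rw [Walk.nil_iff_length_eq.1 hn] at this; omega
    have hnil₂ : ¬ d₂.Nil := fun hn => by
      have := hd₂.three_le_length; rw [Walk.nil_iff_length_eq.1 hn] at this; omega
    have hnc₁ : ¬ c₁.Nil := fun hn => by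
      have := hc₁.three_le_length; rw [Walk.nil_iff_length_eq.1 hn] at this; omega
    have hnc₂ : ¬ c₂.Nil := fun hn => by
      have := hc₂.three_le_length; rw [Walk.nil_iff_length_eq.1 hn] at this; omega
    have hlend₁ : d₁.length = c₁.length := by
      have := (c₁.rotate_edges v hv₁).perm.length_eq
      rwa [Walk.length_edges, Walk.length_edges] at this
    have hlend₂ : d₂.length = c₂.length := by
      have := (c₂.rotate_edges v hv₂).perm.length_eq
      rwa [Walk.length_edges, Walk.length_edges] at this
    have hsupp₁ : d₁.support.toFinset = c₁.support.toFinset := by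
      rw [closed_support_toFinset d₁ hnil₁, closed_support_toFinset c₁ hnc₁,
        perm_toFinset (c₁.support_rotate v hv₁).perm]
    have hsupp₂ : d₂.support.toFinset = c₂.support.toFinset := by
      rw [closed_support_toFinset d₂ hnil₂, closed_support_toFinset c₂ hnc₂,
        perm_toFinset (c₂.support_rotate v hv₂).perm]
    have hinter : d₁.support.toFinset ∩ d₂.support.toFinset = {v} := by
      rw [hsupp₁, hsupp₂, hv]
    -- edge sets disjoint
    have hdisj : Disjoint d₁.edges.toFinset d₂.edges.toFinset := by
      rw [Finset.disjoint_left]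
      intro e he₁ he₂
      induction e using Sym2.ind with
      | _ x y =>
        have hx : x = v := by
          have hx1 : x ∈ d₁.support.toFinset :=
            List.mem_toFinset.2 (d₁.fst_mem_support_of_mem_edges (List.mem_toFinset.1 he₁))
          have hx2 : x ∈ d₂.support.toFinset :=
            List.mem_toFinset.2 (d₂.fst_mem_support_of_mem_edges (List.mem_toFinset.1 he₂))
          have : x ∈ d₁.support.toFinset ∩ d₂.support.toFinset := Finset.mem_inter.2 ⟨hx1, hx2⟩
          rw [hinter] at this; exact Finset.mem_singleton.1 this
        have hy : y = v := by
          have hy1 : y ∈ d₁.support.toFinset :=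
            List.mem_toFinset.2 (d₁.snd_mem_support_of_mem_edges (List.mem_toFinset.1 he₁))
          have hy2 : y ∈ d₂.support.toFinset :=
            List.mem_toFinset.2 (d₂.snd_mem_support_of_mem_edges (List.mem_toFinset.1 he₂))
          have : y ∈ d₁.support.toFinset ∩ d₂.support.toFinset := Finset.mem_inter.2 ⟨hy1, hy2⟩
          rw [hinter] at this; exact Finset.mem_singleton.1 this
        have hadj : (graphOf ω).Adj x y :=
          (graphOf ω).mem_edgeSet.1 (d₁.edges_subset_edgeSet (List.mem_toFinset.1 he₁))
        rw [hx, hy] at hadj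
        exact (graphOf ω).loopless.irrefl v hadj
    obtain ⟨l₁, hl₁t⟩ := closed_tail_concat d₁ hnil₁
    obtain ⟨l₂, hl₂t⟩ := closed_tail_concat d₂ hnil₂
    have hedges₁ : d₁.edges.toFinset = cycEdges v l₁ := by
      rw [edges_eq_zipWith, d₁.support_eq_cons, hl₁t]; rfl
    have hedges₂ : d₂.edges.toFinset = cycEdges v l₂ := by
      rw [edges_eq_zipWith, d₂.support_eq_cons, hl₂t]; rfl
    have hlenl₁ : l₁.length + 1 = d₁.length := by
      have := congrArg List.length hl₁t
      have h2 : d₁.support.length = d₁.length + 1 := d₁.length_support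
      rw [d₁.support_eq_cons] at h2
      simp at this h2
      omega
    have hlenl₂ : l₂.length + 1 = d₂.length := by
      have := congrArg List.length hl₂t
      have h2 : d₂.support.length = d₂.length + 1 := d₂.length_support
      rw [d₂.support_eq_cons] at h2
      simp at this h2
      omega
    have hM₁ : d₁.length ≤ M := hM _ (by rw [hlend₁]; exact_mod_cast hlen₁)
    have hM₂ : d₂.length ≤ M := hM _ (by rw [hlend₂]; exact_mod_cast hlen₂)
    have h3₁ := hd₁.three_le_length
    have h3₂ := hd₂.three_le_length
    have hcard₁ : (cycEdges v l₁).card = d₁.length := by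
      rw [← hedges₁, List.toFinset_card_of_nodup hd₁.edges_nodup, Walk.length_edges]
    have hcard₂ : (cycEdges v l₂).card = d₂.length := by
      rw [← hedges₂, List.toFinset_card_of_nodup hd₂.edges_nodup, Walk.length_edges]
    have hmemF' : (v, l₁, l₂) ∈ F' := by
      rw [hF', Finset.mem_filter]
      constructor
      · rw [hF]
        refine Finset.mem_product.2 ⟨Finset.mem_univ _, Finset.mem_product.2 ⟨?_, ?_⟩⟩
        · exact mem_allLists.2 (show l₁.length < M by omega)
        · exact mem_allLists.2 (show l₂.length < M by omega)
      · show (cycEdges v l₁ ∪ cycEdges v l₂).card = l₁.length + l₂.length + 2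
        rw [← hedges₁, ← hedges₂, Finset.card_union_of_disjoint hdisj, hedges₁, hedges₂,
          hcard₁, hcard₂]
        omega
    refine Set.mem_biUnion hmemF' ?_
    intro e he
    have : e ∈ d₁.edges.toFinset ∪ d₂.edges.toFinset := by
      rw [hedges₁, hedges₂]; exact he
    have hedge : e ∈ (graphOf ω).edgeSet := by
      rcases Finset.mem_union.1 this with h | h
      · exact d₁.edges_subset_edgeSet (List.mem_toFinset.1 h)
      · exact d₂.edges_subset_edgeSet (List.mem_toFinset.1 h)
    induction e using Sym2.ind with
    | _ x y => exact ((graphOf ω).mem_edgeSet.1 hedge).2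
  calc gnp n p _ ≤ gnp n p (⋃ x ∈ F', {ω : Sym2 (Fin n) → Bool | ∀ e ∈ S x, ω e = true}) :=
        measure_mono hsubset
    _ ≤ ∑ x ∈ F', gnp n p {ω : Sym2 (Fin n) → Bool | ∀ e ∈ S x, ω e = true} :=
        measure_biUnion_finset_le _ _
    _ ≤ ∑ x ∈ F', q ^ (S x).card := by
        refine Finset.sum_le_sum fun x _ => ?_
        exact gnp_all_true n p h0 h1 (S x)
    _ = ∑ x ∈ F', q ^ (x.2.1.length + 1) * q ^ (x.2.2.length + 1) := by
        refine Finset.sum_congr rfl fun x hx => ?_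
        rw [hF', Finset.mem_filter] at hx
        rw [hx.2, ← pow_add]
        ring_nf
    _ ≤ ∑ x ∈ F, q ^ (x.2.1.length + 1) * q ^ (x.2.2.length + 1) :=
        Finset.sum_le_sum_of_subset (Finset.filter_subset _ _)
    _ = (n : ℝ≥0∞) * (∑ l ∈ allLists n M, q ^ (l.length + 1)) ^ 2 := sum_F n M q
    _ = (n : ℝ≥0∞) * (∑ a ∈ Finset.range M, (n : ℝ≥0∞) ^ a * q ^ (a + 1)) ^ 2 := by
        rw [sum_allLists]

lemma Ttendsto : Tendsto (fun n : ℕ => (Real.log n)^2 / (n:ℝ)^((1:ℝ)/2)) atTop (𝓝 0) := by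
  have h := (isLittleO_log_rpow_rpow_atTop 2 (by norm_num : (0:ℝ) < 1/2)).tendsto_div_nhds_zero
  have h2 : Tendsto (fun x : ℝ => (Real.log x)^2 / x^((1:ℝ)/2)) atTop (𝓝 0) := by
    refine h.congr fun x => ?_
    rw [show ((2:ℝ)) = ((2:ℕ):ℝ) by norm_num, Real.rpow_natCast]
  exact h2.comp tendsto_natCast_atTop_atTop

lemma ennreal_sum_eq (n M : ℕ) (p : ℝ) (h0 : 0 ≤ p) :
    (n : ℝ≥0∞) * (∑ a ∈ Finset.range M, (n : ℝ≥0∞) ^ a * ENNReal.ofReal p ^ (a + 1)) ^ 2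
      = ENNReal.ofReal ((n:ℝ) * (∑ a ∈ Finset.range M, (n:ℝ) ^ a * p ^ (a + 1)) ^ 2) := by
  rw [ENNReal.ofReal_mul (by positivity), ENNReal.ofReal_pow (by positivity),
    ENNReal.ofReal_sum_of_nonneg (fun a _ => by positivity), ENNReal.ofReal_natCast]
  congr 2
  refine Finset.sum_congr rfl fun a _ => ?_
  rw [ENNReal.ofReal_mul (by positivity), ENNReal.ofReal_pow h0,
    ← ENNReal.ofReal_natCast n, ← ENNReal.ofReal_pow (by positivity)]

lemma R_le (n : ℕ) (p : ℝ) (hn : 2 ≤ (n:ℝ)) (hp0 : 0 < p)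
    (hX3 : 3 ≤ (n:ℝ) * p) (hlog1 : 1 ≤ Real.log ((n:ℝ) * p))
    (hLlog : Real.log n / (4 * Real.log ((n:ℝ) * p)) ≤ Real.log n) :
    (n:ℝ) * (∑ a ∈ Finset.range ⌊Real.log n / (4 * Real.log ((n:ℝ) * p))⌋₊,
        (n:ℝ) ^ a * p ^ (a + 1)) ^ 2
      ≤ (Real.log n)^2 / (n:ℝ)^((1:ℝ)/2) := by
  set X : ℝ := (n:ℝ) * p with hX
  set L : ℝ := Real.log n / (4 * Real.log X) with hL
  set M : ℕ := ⌊L⌋₊ with hM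
  have hn0 : (0:ℝ) < n := by linarith
  have hX1 : (1:ℝ) ≤ X := by linarith
  have hX0 : (0:ℝ) < X := by linarith
  have hlogX0 : (0:ℝ) < Real.log X := by linarith
  have hL0 : 0 ≤ L := by positivity
  have hML : (M:ℝ) ≤ L := Nat.floor_le hL0
  have hlogn0 : (0:ℝ) ≤ Real.log n := Real.log_nonneg (by linarith)
  have hrpow_pos : (0:ℝ) < (n:ℝ)^((1:ℝ)/2) := by positivity
  rcases Nat.eq_zero_or_pos M with hM0 | hM1
  · rw [hM0]
    simp
    positivity
  -- main case
  have hterm : ∀ a ∈ Finset.range M, (n:ℝ) ^ a * p ^ (a+1) ≤ X ^ (M-1) * p := by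
    intro a ha
    have ha' : a ≤ M - 1 := by have := Finset.mem_range.1 ha; omega
    have h1 : (n:ℝ) ^ a * p ^ (a+1) = X ^ a * p := by
      rw [hX, mul_pow, pow_succ]; ring
    rw [h1]
    have : X ^ a ≤ X ^ (M-1) := pow_le_pow_right₀ hX1 ha'
    exact mul_le_mul_of_nonneg_right this hp0.le
  have hsum : ∑ a ∈ Finset.range M, (n:ℝ) ^ a * p ^ (a+1) ≤ M * (X ^ (M-1) * p) := by
    have := Finset.sum_le_card_nsmul (Finset.range M) _ _ hterm
    simpa [Finset.card_range, nsmul_eq_mul] using this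
  have hsum0 : 0 ≤ ∑ a ∈ Finset.range M, (n:ℝ) ^ a * p ^ (a+1) := by
    refine Finset.sum_nonneg fun a _ => by positivity
  have hstep1 : (n:ℝ) * (∑ a ∈ Finset.range M, (n:ℝ) ^ a * p ^ (a+1)) ^ 2
      ≤ (n:ℝ) * (M * (X ^ (M-1) * p)) ^ 2 := by
    have := pow_le_pow_left₀ hsum0 hsum 2
    exact mul_le_mul_of_nonneg_left this hn0.le
  have hXM : X ^ (2*M) ≤ (n:ℝ)^((1:ℝ)/2) := by
    have hlogXne : Real.log X ≠ 0 := hlogX0.ne'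
    have h1 : X ^ (2*M) = Real.exp (((2*M : ℕ) : ℝ) * Real.log X) := by
      rw [← Real.exp_log hX0, ← Real.exp_nat_mul, Real.exp_log hX0]
    have h2 : 2 * (M:ℝ) * Real.log X ≤ 2 * L * Real.log X := by
      nlinarith [hML, hlogX0.le]
    have h3 : 2 * L * Real.log X = Real.log n / 2 := by
      rw [hL]; field_simp; ring
    have h4 : (n:ℝ)^((1:ℝ)/2) = Real.exp (Real.log n * (1/2)) :=
      Real.rpow_def_of_pos hn0 _
    rw [h1, h4]
    apply Real.exp_le_exp.2
    push_cast
    linarith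
  have hsq : (n:ℝ) * (M * (X ^ (M-1) * p)) ^ 2 = (M:ℝ)^2 * X ^ (2*M) / n := by
    have hXe : X ^ (M-1) * X ^ (M-1) * X * X = X ^ (2*M) := by
      rw [← pow_add, ← pow_succ, ← pow_succ]
      congr 1
      omega
    have : (n:ℝ) * (M * (X ^ (M-1) * p)) ^ 2 * n = (M:ℝ)^2 * X ^ (2*M) := by
      rw [← hXe, hX]; ring
    field_simp at this ⊢
    linarith [this]
  have hMlog : (M:ℝ) ≤ Real.log n := le_trans hML hLlog
  have hfinal : (M:ℝ)^2 * X ^ (2*M) / n ≤ (Real.log n)^2 / (n:ℝ)^((1:ℝ)/2) := by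
    have hnn : (n:ℝ)^((1:ℝ)/2) * (n:ℝ)^((1:ℝ)/2) = n := by
      rw [← Real.rpow_add hn0]; norm_num
    rw [div_le_div_iff₀ hn0 hrpow_pos]
    have hM2 : (M:ℝ)^2 ≤ (Real.log n)^2 := by
      have hM0' : (0:ℝ) ≤ M := Nat.cast_nonneg M
      nlinarith
    calc (M:ℝ)^2 * X ^ (2*M) * (n:ℝ)^((1:ℝ)/2)
        ≤ (Real.log n)^2 * (n:ℝ)^((1:ℝ)/2) * (n:ℝ)^((1:ℝ)/2) := by
          have hXM0 : (0:ℝ) ≤ X ^ (2*M) := by positivity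
          exact mul_le_mul_of_nonneg_right
            (mul_le_mul hM2 hXM hXM0 (by positivity)) hrpow_pos.le
      _ = (Real.log n)^2 * n := by rw [mul_assoc, hnn]
  calc (n:ℝ) * (∑ a ∈ Finset.range M, (n:ℝ) ^ a * p ^ (a+1)) ^ 2
      ≤ (n:ℝ) * (M * (X ^ (M-1) * p)) ^ 2 := hstep1
    _ = (M:ℝ)^2 * X ^ (2*M) / n := hsq
    _ ≤ (Real.log n)^2 / (n:ℝ)^((1:ℝ)/2) := hfinal


theorem statement5 (w : ℕ → ℝ) (hw : Tendsto w atTop atTop) (p : ℕ → ℝ)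
    (hp : ∀ n : ℕ,
      (Real.log n + Real.log (Real.log n) + w n) / (n : ℝ) ≤ p n ∧
        p n ≤ 10 * Real.log n / (n : ℝ)) :
    Tendsto (fun n : ℕ => gnp n (p n)
      {ω | ¬ ∃ (a b : Fin n) (c₁ : (graphOf ω).Walk a a) (c₂ : (graphOf ω).Walk b b),
          c₁.IsCycle ∧ c₂.IsCycle ∧
          (c₁.length : ℝ) ≤ Real.log n / (4 * Real.log ((n : ℝ) * p n)) ∧
          (c₂.length : ℝ) ≤ Real.log n / (4 * Real.log ((n : ℝ) * p n)) ∧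
          (c₁.support.toFinset ∩ c₂.support.toFinset).card = 1})
      atTop (nhds 1) := by
  classical
  have hA : ∀ᶠ n : ℕ in atTop, 0 ≤ w n := hw.eventually_ge_atTop 0
  have hC : ∀ᶠ n : ℕ in atTop, 3 ≤ Real.log n :=
    (Real.tendsto_log_atTop.comp tendsto_natCast_atTop_atTop).eventually_ge_atTop 3
  have hD : ∀ᶠ n : ℕ in atTop, 2 ≤ (n : ℝ) :=
    tendsto_natCast_atTop_atTop.eventually_ge_atTop 2
  have hb1 : Tendsto (fun x : ℝ => Real.log x / x) atTop (𝓝 0) := by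
    have := Real.tendsto_pow_log_div_mul_add_atTop 1 0 1 one_ne_zero
    simpa using this
  have hB : ∀ᶠ n : ℕ in atTop, Real.log n / (n : ℝ) < 1/10 :=
    (hb1.comp tendsto_natCast_atTop_atTop).eventually_lt_const (by norm_num)
  -- the key eventual bound
  have hev : ∀ᶠ n : ℕ in atTop,
      gnp n (p n) {ω : Sym2 (Fin n) → Bool |
          ∃ (a b : Fin n) (c₁ : (graphOf ω).Walk a a) (c₂ : (graphOf ω).Walk b b),
          c₁.IsCycle ∧ c₂.IsCycle ∧
          (c₁.length : ℝ) ≤ Real.log n / (4 * Real.log ((n : ℝ) * p n)) ∧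
          (c₂.length : ℝ) ≤ Real.log n / (4 * Real.log ((n : ℝ) * p n)) ∧
          (c₁.support.toFinset ∩ c₂.support.toFinset).card = 1}
        ≤ ENNReal.ofReal ((Real.log n)^2 / (n:ℝ)^((1:ℝ)/2))
      ∧ gnp n (p n) Set.univ = 1 := by
    filter_upwards [hA, hB, hC, hD] with n hA' hB' hC' hD'
    have hn0 : (0:ℝ) < n := by linarith
    have hloglog : 0 ≤ Real.log (Real.log n) := Real.log_nonneg (by linarith)
    have hp1 := (hp n).1
    have hp2 := (hp n).2
    have hnum : (3:ℝ) ≤ Real.log n + Real.log (Real.log n) + w n := by linarith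
    have hXnum : Real.log n + Real.log (Real.log n) + w n ≤ (n:ℝ) * p n := by
      have := (div_le_iff₀ hn0).1 hp1
      linarith
    have hX3 : (3:ℝ) ≤ (n:ℝ) * p n := by linarith
    have hp0 : 0 < p n := lt_of_lt_of_le (by positivity) hp1
    have hple1 : p n ≤ 1 := by
      have h10 : 10 * Real.log n ≤ (n:ℝ) := by
        have := (div_lt_iff₀ hn0).1 hB'
        linarith
      have : 10 * Real.log n / (n:ℝ) ≤ 1 := by
        rw [div_le_one hn0]; exact h10
      linarith
    have hlog1 : 1 ≤ Real.log ((n:ℝ) * p n) := by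
      rw [Real.le_log_iff_exp_le (by linarith)]
      have := Real.exp_one_lt_d9
      linarith
    have hlogn0 : 0 ≤ Real.log n := by linarith
    have hLlog : Real.log n / (4 * Real.log ((n:ℝ) * p n)) ≤ Real.log n :=
      div_le_self hlogn0 (by linarith)
    constructor
    · calc gnp n (p n) _
          ≤ (n : ℝ≥0∞) * (∑ a ∈ Finset.range ⌊Real.log n / (4 * Real.log ((n:ℝ) * p n))⌋₊,
              (n : ℝ≥0∞) ^ a * ENNReal.ofReal (p n) ^ (a + 1)) ^ 2 :=
            bad_bound n (p n) hp0.le hple1 _ (fun k hk => Nat.le_floor hk)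
        _ = ENNReal.ofReal ((n:ℝ) * (∑ a ∈ Finset.range
              ⌊Real.log n / (4 * Real.log ((n:ℝ) * p n))⌋₊, (n:ℝ) ^ a * p n ^ (a + 1)) ^ 2) :=
            ennreal_sum_eq n _ (p n) hp0.le
        _ ≤ ENNReal.ofReal ((Real.log n)^2 / (n:ℝ)^((1:ℝ)/2)) :=
            ENNReal.ofReal_le_ofReal (R_le n (p n) hD' hp0 hX3 hlog1 hLlog)
    · rw [gnp, ← Set.pi_univ Set.univ, Measure.pi_pi]
      exact Finset.prod_eq_one fun e _ => bern_univ (p n) hp0.le hple1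
  -- g tends to zero
  have hofT : Tendsto (fun n : ℕ => ENNReal.ofReal ((Real.log n)^2 / (n:ℝ)^((1:ℝ)/2)))
      atTop (𝓝 0) := by
    have := ENNReal.tendsto_ofReal (Ttendsto)
    simpa using this
  have hg0 : Tendsto (fun n : ℕ => gnp n (p n) {ω : Sym2 (Fin n) → Bool |
      ∃ (a b : Fin n) (c₁ : (graphOf ω).Walk a a) (c₂ : (graphOf ω).Walk b b),
      c₁.IsCycle ∧ c₂.IsCycle ∧
      (c₁.length : ℝ) ≤ Real.log n / (4 * Real.log ((n : ℝ) * p n)) ∧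
      (c₂.length : ℝ) ≤ Real.log n / (4 * Real.log ((n : ℝ) * p n)) ∧
      (c₁.support.toFinset ∩ c₂.support.toFinset).card = 1}) atTop (𝓝 0) := by
    refine tendsto_of_tendsto_of_tendsto_of_le_of_le' tendsto_const_nhds hofT
      (.of_forall fun n => zero_le) ?_
    filter_upwards [hev] with n hn using hn.1
  -- squeeze for the main statement
  have hupper : ∀ᶠ n : ℕ in atTop, gnp n (p n)
      {ω : Sym2 (Fin n) → Bool | ¬ ∃ (a b : Fin n) (c₁ : (graphOf ω).Walk a a)
          (c₂ : (graphOf ω).Walk b b),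
          c₁.IsCycle ∧ c₂.IsCycle ∧
          (c₁.length : ℝ) ≤ Real.log n / (4 * Real.log ((n : ℝ) * p n)) ∧
          (c₂.length : ℝ) ≤ Real.log n / (4 * Real.log ((n : ℝ) * p n)) ∧
          (c₁.support.toFinset ∩ c₂.support.toFinset).card = 1} ≤ 1 := by
    filter_upwards [hev] with n hn
    calc gnp n (p n) _ ≤ gnp n (p n) Set.univ := measure_mono (Set.subset_univ _)
      _ = 1 := hn.2
  have hlower : ∀ᶠ n : ℕ in atTop,
      1 - gnp n (p n) {ω : Sym2 (Fin n) → Bool |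
        ∃ (a b : Fin n) (c₁ : (graphOf ω).Walk a a) (c₂ : (graphOf ω).Walk b b),
        c₁.IsCycle ∧ c₂.IsCycle ∧
        (c₁.length : ℝ) ≤ Real.log n / (4 * Real.log ((n : ℝ) * p n)) ∧
        (c₂.length : ℝ) ≤ Real.log n / (4 * Real.log ((n : ℝ) * p n)) ∧
        (c₁.support.toFinset ∩ c₂.support.toFinset).card = 1}
      ≤ gnp n (p n) {ω : Sym2 (Fin n) → Bool |
        ¬ ∃ (a b : Fin n) (c₁ : (graphOf ω).Walk a a) (c₂ : (graphOf ω).Walk b b),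
        c₁.IsCycle ∧ c₂.IsCycle ∧
        (c₁.length : ℝ) ≤ Real.log n / (4 * Real.log ((n : ℝ) * p n)) ∧
        (c₂.length : ℝ) ≤ Real.log n / (4 * Real.log ((n : ℝ) * p n)) ∧
        (c₁.support.toFinset ∩ c₂.support.toFinset).card = 1} := by
    filter_upwards [hev] with n hn
    rw [tsub_le_iff_right]
    have huniv : ({ω : Sym2 (Fin n) → Bool |
        ¬ ∃ (a b : Fin n) (c₁ : (graphOf ω).Walk a a) (c₂ : (graphOf ω).Walk b b),
        c₁.IsCycle ∧ c₂.IsCycle ∧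
        (c₁.length : ℝ) ≤ Real.log n / (4 * Real.log ((n : ℝ) * p n)) ∧
        (c₂.length : ℝ) ≤ Real.log n / (4 * Real.log ((n : ℝ) * p n)) ∧
        (c₁.support.toFinset ∩ c₂.support.toFinset).card = 1}
        ∪ {ω : Sym2 (Fin n) → Bool |
        ∃ (a b : Fin n) (c₁ : (graphOf ω).Walk a a) (c₂ : (graphOf ω).Walk b b),
        c₁.IsCycle ∧ c₂.IsCycle ∧
        (c₁.length : ℝ) ≤ Real.log n / (4 * Real.log ((n : ℝ) * p n)) ∧
        (c₂.length : ℝ) ≤ Real.log n / (4 * Real.log ((n : ℝ) * p n)) ∧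
        (c₁.support.toFinset ∩ c₂.support.toFinset).card = 1}) = Set.univ := by
      ext ω
      simp only [Set.mem_union, Set.mem_setOf_eq, Set.mem_univ, iff_true]
      exact (em _).symm
    calc (1 : ℝ≥0∞) = gnp n (p n) Set.univ := hn.2.symm
      _ ≤ _ := by rw [← huniv]; exact measure_union_le _ _
  have hlow_tendsto : Tendsto (fun n : ℕ =>
      1 - gnp n (p n) {ω : Sym2 (Fin n) → Bool |
        ∃ (a b : Fin n) (c₁ : (graphOf ω).Walk a a) (c₂ : (graphOf ω).Walk b b),
        c₁.IsCycle ∧ c₂.IsCycle ∧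
        (c₁.length : ℝ) ≤ Real.log n / (4 * Real.log ((n : ℝ) * p n)) ∧
        (c₂.length : ℝ) ≤ Real.log n / (4 * Real.log ((n : ℝ) * p n)) ∧
        (c₁.support.toFinset ∩ c₂.support.toFinset).card = 1}) atTop (𝓝 1) := by
    have hcont : Continuous (fun x : ℝ≥0∞ => 1 - x) :=
      ENNReal.continuous_sub_left (by norm_num)
    have := (hcont.tendsto 0).comp hg0
    simpa only [Function.comp_def, tsub_zero] using this
  exact tendsto_of_tendsto_of_tendsto_of_le_of_le' hlow_tendsto tendsto_const_nhds
    hlower hupper
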